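/- Let e₁, e₂, e₁', e₂' be integers with e₂ > e₁ ≥ 0 and e₂' > e₁' ≥ 0, and suppose (e₁, e₂) ≠ (e₁', e₂'). Define σ, σ' : SL(2,k) → SL(4,k) by σ(A) = A^{(p^{e₂})} ⊗ A^{(p^{e₁})} and σ'(A) = A^{(p^{e₂'})} ⊗ A^{(p^{e₁'})}. Then σ and σ' are not equivalent: there exists no P ∈ GL(4,k) such that P⁻¹·σ(A)·P = σ'(A) for all A ∈ SL(2,k). -/

import Mathlib

open Matrix

/-- Entrywise `m`-th power of a 2×2 matrix: `A^{(m)} = [[a^m, b^m],[c^m, d^m]]`. -/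
noncomputable def entryPow {k : Type*} [Field k] (A : Matrix (Fin 2) (Fin 2) k) (m : ℕ) :
    Matrix (Fin 2) (Fin 2) k :=
  Matrix.of fun i j => A i j ^ m

/-- The Kronecker product of two 2×2 matrices as a 4×4 matrix in 2×2 blocks. -/
noncomputable def kron4 {k : Type*} [Field k] (X Y : Matrix (Fin 2) (Fin 2) k) :
    Matrix (Fin 4) (Fin 4) k :=
  !![X 0 0 * Y 0 0, X 0 0 * Y 0 1, X 0 1 * Y 0 0, X 0 1 * Y 0 1;
     X 0 0 * Y 1 0, X 0 0 * Y 1 1, X 0 1 * Y 1 0, X 0 1 * Y 1 1;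
     X 1 0 * Y 0 0, X 1 0 * Y 0 1, X 1 1 * Y 0 0, X 1 1 * Y 0 1;
     X 1 0 * Y 1 0, X 1 0 * Y 1 1, X 1 1 * Y 1 0, X 1 1 * Y 1 1]

lemma aux_expand {k : Type*} [Field k] (t : k) (ht : t ≠ 0) (a b m : ℕ) :
    (t^a + t⁻¹^a) * (t^b + t⁻¹^b) * t^(a+b+m)
      = t^(2*a+2*b+m) + t^(2*a+m) + t^(2*b+m) + t^m := by
  have h1 : t^a * t⁻¹^a = 1 := by rw [← mul_pow, mul_inv_cancel₀ ht, one_pow]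
  have h2 : t^b * t⁻¹^b = 1 := by rw [← mul_pow, mul_inv_cancel₀ ht, one_pow]
  linear_combination (t^(2*a)*t^m) * h2 + (t^(2*b)*t^m) * h1 + t^m * (t^b*t⁻¹^b) * h1 + t^m * h2

/-- Numeric key lemma: equality of the coefficient indicator functions forces
equality of the exponent pairs. -/
lemma aux_key {k : Type*} [Field k] (a b a' b' : ℕ)
    (ha : 0 < a) (hb : a < b) (ha' : 0 < a') (hb' : a' < b')
    (H : ∀ n : ℕ,
      ((if n = 2*b+2*a+(a'+b') then 1 else 0) + (if n = 2*b+(a'+b') then 1 else 0)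
        + (if n = 2*a+(a'+b') then 1 else 0) + (if n = a'+b' then 1 else 0) : k)
      = (if n = 2*b'+2*a'+(a+b) then 1 else 0) + (if n = 2*b'+(a+b) then 1 else 0)
        + (if n = 2*a'+(a+b) then 1 else 0) + (if n = a+b then 1 else 0)) :
    a = a' ∧ b = b' := by
  have hs : a + b = a' + b' := by
    by_contra hne
    rcases Nat.lt_or_ge (a+b) (a'+b') with hlt | hge
    · have H1 := H (2*(a'+b') + (a+b))
      rw [if_neg (by omega), if_neg (by omega), if_neg (by omega), if_neg (by omega),
        if_pos (by omega), if_neg (by omega), if_neg (by omega), if_neg (by omega)] at H1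
      simp at H1
    · have hlt : a' + b' < a + b := by omega
      have H1 := H (2*(a+b) + (a'+b'))
      rw [if_pos (by omega), if_neg (by omega), if_neg (by omega), if_neg (by omega),
        if_neg (by omega), if_neg (by omega), if_neg (by omega), if_neg (by omega)] at H1
      simp at H1
  have hbb : b = b' := by
    by_contra hne
    rcases Nat.lt_or_ge b b' with hlt | hge
    · have H1 := H (2*b' + (a+b))
      rw [if_neg (by omega), if_neg (by omega), if_neg (by omega), if_neg (by omega),
        if_neg (by omega), if_pos (by omega), if_neg (by omega), if_neg (by omega)] at H1
      simp at H1
    · have hlt : b' < b := by omega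
      have H1 := H (2*b + (a'+b'))
      rw [if_neg (by omega), if_pos (by omega), if_neg (by omega), if_neg (by omega),
        if_neg (by omega), if_neg (by omega), if_neg (by omega), if_neg (by omega)] at H1
      simp at H1
  exact ⟨by omega, hbb⟩

/-- Two Kronecker-product homomorphisms
`σ(A) = A^{(p^{e₂})} ⊗ A^{(p^{e₁})}` and `σ'(A) = A^{(p^{e₂'})} ⊗ A^{(p^{e₁'})}` with
distinct parameter pairs `(e₁,e₂) ≠ (e₁',e₂')` are not equivalent. -/
theorem stmt18 {k : Type*} [Field k] [IsAlgClosed k] {p : ℕ} [Fact p.Prime] [CharP k p]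
    (e₁ e₂ e₁' e₂' : ℕ) (h : e₁ < e₂) (h' : e₁' < e₂')
    (hne : (e₁, e₂) ≠ (e₁', e₂')) :
    ¬∃ P : GL (Fin 4) k, ∀ A : SpecialLinearGroup (Fin 2) k,
      ((P⁻¹ : GL (Fin 4) k) : Matrix (Fin 4) (Fin 4) k) *
          kron4 (entryPow A.1 (p ^ e₂)) (entryPow A.1 (p ^ e₁)) *
          (P : Matrix (Fin 4) (Fin 4) k) =
        kron4 (entryPow A.1 (p ^ e₂')) (entryPow A.1 (p ^ e₁')) := by
  rintro ⟨P, hP⟩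
  have hp2 : 2 ≤ p := (Fact.out : p.Prime).two_le
  set a := p ^ e₁ with ha_def
  set b := p ^ e₂ with hb_def
  set a' := p ^ e₁' with ha'_def
  set b' := p ^ e₂' with hb'_def
  have ha : 0 < a := Nat.pow_pos (by omega)
  have hb : a < b := Nat.pow_lt_pow_right (by omega) h
  have ha' : 0 < a' := Nat.pow_pos (by omega)
  have hb' : a' < b' := Nat.pow_lt_pow_right (by omega) h'
  -- trace identity
  have key : ∀ t : k, t ≠ 0 →
      (t^b + t⁻¹^b) * (t^a + t⁻¹^a) = (t^b' + t⁻¹^b') * (t^a' + t⁻¹^a') := by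
    intro t ht
    have hdet : (!![t,0;0,t⁻¹] : Matrix (Fin 2) (Fin 2) k).det = 1 := by
      simp [Matrix.det_fin_two_of, mul_inv_cancel₀ ht]
    have hA := hP ⟨_, hdet⟩
    have htr := congrArg Matrix.trace hA
    rw [Matrix.trace_mul_cycle] at htr
    rw [show ((P : Matrix (Fin 4) (Fin 4) k) * ((P⁻¹ : GL (Fin 4) k) : Matrix (Fin 4) (Fin 4) k))
        = 1 from P.mul_inv, one_mul] at htr
    simp only [kron4, entryPow, Matrix.trace, Matrix.diag, Fin.sum_univ_four, Matrix.of_apply,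
      Matrix.cons_val', Matrix.cons_val_zero, Matrix.cons_val_one, Matrix.head_cons,
      Matrix.empty_val', Matrix.cons_val_fin_one, Matrix.head_fin_const, Matrix.cons_val_two,
      Matrix.cons_val_three, Matrix.tail_cons] at htr
    linear_combination htr
  -- polynomial identity
  open Polynomial in
  have hpoly : (X^(2*b+2*a+(a'+b')) + X^(2*b+(a'+b')) + X^(2*a+(a'+b')) + X^(a'+b') : k[X])
      = X^(2*b'+2*a'+(a+b)) + X^(2*b'+(a+b)) + X^(2*a'+(a+b)) + X^(a+b) := by
    apply Polynomial.funext
    intro t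
    simp only [eval_add, eval_pow, eval_X]
    rcases eq_or_ne t 0 with rfl | ht
    · rw [zero_pow (by omega), zero_pow (by omega), zero_pow (by omega), zero_pow (by omega),
        zero_pow (by omega), zero_pow (by omega), zero_pow (by omega), zero_pow (by omega)]
    · rw [← aux_expand t ht b a (a'+b'), ← aux_expand t ht b' a' (a+b), key t ht,
        show b' + a' + (a+b) = b + a + (a'+b') by omega]
  have H : ∀ n : ℕ,
      ((if n = 2*b+2*a+(a'+b') then 1 else 0) + (if n = 2*b+(a'+b') then 1 else 0)
        + (if n = 2*a+(a'+b') then 1 else 0) + (if n = a'+b' then 1 else 0) : k)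
      = (if n = 2*b'+2*a'+(a+b) then 1 else 0) + (if n = 2*b'+(a+b) then 1 else 0)
        + (if n = 2*a'+(a+b) then 1 else 0) + (if n = a+b then 1 else 0) := by
    intro n
    have := congrArg (fun f => Polynomial.coeff f n) hpoly
    simpa only [Polynomial.coeff_add, Polynomial.coeff_X_pow] using this
  obtain ⟨haa, hbb⟩ := aux_key a b a' b' ha hb ha' hb' H
  have he1 : e₁ = e₁' := Nat.pow_right_injective hp2 haa
  have he2 : e₂ = e₂' := Nat.pow_right_injective hp2 hbb
  exact hne (by rw [he1, he2])
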